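/- Let r ∈ ℚ_{>0} be such that S_r is atomic (i.e., r = 1 or n(r) > 1). (1) If r < 1, then ω(1) = ∞: for every n ∈ ℕ there exist atoms a_1, …, a_t of S_r with 1 dividing a_1 + ⋯ + a_t in S_r but with 1 dividing no subsum of at most n of the a_i. (2) If r ∈ ℚ_{>1} \ ℕ, then ω(1) = d(r). -/

import Mathlib

open Finsupp
open scoped ENNReal

/-- The Puiseux monoid (rational cyclic semiring) `S_r`, the additive submonoid of `ℚ`
generated by the nonnegative powers of `r`. -/
def S (r : ℚ) : AddSubmonoid ℚ := AddSubmonoid.closure {x : ℚ | ∃ n : ℕ, x = r ^ n}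

/-- A factorization of `x` over the powers of `r`: a finitely supported choice of
coefficients `α i` with `∑ α i * r ^ i = x`. -/
def IsFactorization (r x : ℚ) (α : ℕ →₀ ℕ) : Prop :=
  (α.sum fun i c => (c : ℚ) * r ^ i) = x

/-- The length of a factorization. -/
def flen (α : ℕ →₀ ℕ) : ℕ := α.sum fun _ c => c

/-- The set of lengths of factorizations of `x` over the powers of `r`. -/
def lengthSet (r x : ℚ) : Set ℕ :=
  {t | ∃ α : ℕ →₀ ℕ, IsFactorization r x α ∧ flen α = t}

/-- An atom of `S_r`: a nonzero element that is not the sum of two nonzero elements. -/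
def IsAtomS (r a : ℚ) : Prop :=
  a ∈ S r ∧ a ≠ 0 ∧ ¬ ∃ y z : ℚ, y ∈ S r ∧ z ∈ S r ∧ y ≠ 0 ∧ z ≠ 0 ∧ a = y + z

/-- The set of lengths of `x` as sums of atoms of `S_r`. -/
def atomLengthSet (r x : ℚ) : Set ℕ :=
  {t | ∃ f : Fin t → ℚ, (∀ i, IsAtomS r (f i)) ∧ ∑ i, f i = x}

/-- `x` divides `y` in `S_r`. -/
def DvdS (r x y : ℚ) : Prop := y - x ∈ S r

/-- `n` bounds the omega-primality of `x` in `S_r`. -/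
def OmegaBound (r x : ℚ) (n : ℕ) : Prop :=
  ∀ (t : ℕ) (a : Fin t → ℚ), (∀ i, IsAtomS r (a i)) → DvdS r x (∑ i, a i) →
    ∃ T : Finset (Fin t), T.card ≤ n ∧ DvdS r x (∑ i ∈ T, a i)

/-- The omega invariant of `x` in `S_r`. -/
noncomputable def omegaS (r x : ℚ) : ℕ∞ :=
  sInf {N : ℕ∞ | ∃ n : ℕ, N = n ∧ OmegaBound r x n}


/-! ### value of a multiset of exponents -/

def mval (r : ℚ) (m : Multiset ℕ) : ℚ := (m.map (r ^ ·)).sum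

lemma mval_zero (r : ℚ) : mval r 0 = 0 := rfl

lemma mval_cons (r : ℚ) (j : ℕ) (m : Multiset ℕ) :
    mval r (j ::ₘ m) = r ^ j + mval r m := by
  simp [mval]

lemma mval_add (r : ℚ) (m m' : Multiset ℕ) :
    mval r (m + m') = mval r m + mval r m' := by
  simp [mval]

lemma mval_replicate (r : ℚ) (q j : ℕ) :
    mval r (Multiset.replicate q j) = q * r ^ j := by
  simp [mval, Multiset.map_replicate, Multiset.sum_replicate, nsmul_eq_mul]

lemma mval_nonneg {r : ℚ} (h0 : 0 < r) (m : Multiset ℕ) : 0 ≤ mval r m := by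
  induction m using Multiset.induction with
  | empty => simp [mval]
  | cons j m ih => rw [mval_cons]; positivity

lemma le_mval_of_mem {r : ℚ} (h0 : 0 < r) {j : ℕ} {m : Multiset ℕ} (hj : j ∈ m) :
    r ^ j ≤ mval r m := by
  obtain ⟨m', rfl⟩ := Multiset.exists_cons_of_mem hj
  rw [mval_cons]
  nlinarith [mval_nonneg h0 m']

lemma mem_S_iff {r : ℚ} {x : ℚ} : x ∈ S r ↔ ∃ m : Multiset ℕ, mval r m = x := by
  constructor
  · intro hx
    induction hx using AddSubmonoid.closure_induction with
    | mem y hy => obtain ⟨n, rfl⟩ := hy; exact ⟨{n}, by simp [mval]⟩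
    | zero => exact ⟨0, rfl⟩
    | add y z _ _ hy hz =>
        obtain ⟨my, hmy⟩ := hy; obtain ⟨mz, hmz⟩ := hz
        exact ⟨my + mz, by rw [mval_add, hmy, hmz]⟩
  · rintro ⟨m, rfl⟩
    induction m using Multiset.induction with
    | empty => exact zero_mem _
    | cons j m ih =>
        rw [mval_cons]
        exact add_mem (AddSubmonoid.subset_closure ⟨j, rfl⟩) ih

lemma S_nonneg {r : ℚ} (h0 : 0 < r) {x : ℚ} (hx : x ∈ S r) : 0 ≤ x := by
  obtain ⟨m, rfl⟩ := mem_S_iff.mp hx; exact mval_nonneg h0 m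

lemma nat_mem_S {r : ℚ} (q : ℕ) : (q : ℚ) ∈ S r := by
  refine mem_S_iff.mpr ⟨Multiset.replicate q 0, ?_⟩
  simp [mval_replicate]

/-! ### basic numerics -/

section Numer
variable {r : ℚ} (h0 : 0 < r)

lemma den_mul_self (h0 : 0 < r) : (r.den : ℚ) * r = (r.num.natAbs : ℚ) := by
  have hnum : (0:ℤ) ≤ r.num := le_of_lt (Rat.num_pos.mpr h0)
  have h2 : ((r.num.natAbs : ℚ)) = (r.num : ℚ) := by
    rw [Nat.cast_natAbs, abs_of_nonneg hnum]
  rw [h2, mul_comm]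
  exact_mod_cast Rat.mul_den_eq_num r

lemma coprime_nd : (r.num.natAbs).Coprime r.den := r.reduced

end Numer

/-! ### integer weight -/

def W (r : ℚ) (M : ℕ) (m : Multiset ℕ) : ℕ :=
  (m.map fun j => r.num.natAbs ^ j * r.den ^ (M - j)).sum

lemma cast_term {r : ℚ} (h0 : 0 < r) {j M : ℕ} (hj : j ≤ M) :
    ((r.num.natAbs ^ j * r.den ^ (M - j) : ℕ) : ℚ) = (r.den : ℚ) ^ M * r ^ j := by
  have hd := den_mul_self h0
  push_cast
  rw [show ((r.num.natAbs : ℚ)) ^ j = ((r.den : ℚ) * r) ^ j by rw [hd], mul_pow,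
    mul_comm (((r.den : ℚ)) ^ j) (r ^ j), mul_assoc, ← pow_add, Nat.add_sub_cancel' hj,
    mul_comm]

lemma castW {r : ℚ} (h0 : 0 < r) (M : ℕ) (m : Multiset ℕ) (hb : ∀ j ∈ m, j ≤ M) :
    (W r M m : ℚ) = (r.den : ℚ) ^ M * mval r m := by
  induction m using Multiset.induction with
  | empty => simp [W, mval]
  | cons j m ih =>
    have hj := hb j (Multiset.mem_cons_self j m)
    have hW : W r M (j ::ₘ m) = (r.num.natAbs ^ j * r.den ^ (M - j)) + W r M m := by
      simp [W]
    rw [hW, Nat.cast_add, cast_term h0 hj,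
      ih (fun i hi => hb i (Multiset.mem_cons_of_mem hi)), mval_cons]
    ring

lemma modW (r : ℚ) (M : ℕ) (m : Multiset ℕ) (hb : ∀ j ∈ m, j ≤ M) :
    ∃ q : ℕ, W r M m = m.count M * r.num.natAbs ^ M + r.den * q := by
  induction m using Multiset.induction with
  | empty => exact ⟨0, by simp [W]⟩
  | cons j m ih =>
    obtain ⟨q, hq⟩ := ih (fun i hi => hb i (Multiset.mem_cons_of_mem hi))
    have hW : W r M (j ::ₘ m) = (r.num.natAbs ^ j * r.den ^ (M - j)) + W r M m := by
      simp [W]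
    by_cases hj : j = M
    · subst hj
      refine ⟨q, ?_⟩
      rw [hW, hq, Multiset.count_cons_self, Nat.sub_self, pow_zero, mul_one]
      ring
    · have hjM : j < M := lt_of_le_of_ne (hb j (Multiset.mem_cons_self j m)) hj
      refine ⟨r.num.natAbs ^ j * r.den ^ (M - j - 1) + q, ?_⟩
      rw [hW, hq, Multiset.count_cons_of_ne (Ne.symm hj)]
      have : r.den ^ (M - j) = r.den * r.den ^ (M - j - 1) := by
        rw [← pow_succ']
        congr 1
        omega
      rw [this]
      ring

/-! ### atoms -/

lemma pow_mem_S (r : ℚ) (k : ℕ) : r ^ k ∈ S r :=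
  AddSubmonoid.subset_closure ⟨k, rfl⟩

lemma mval_mono {r : ℚ} (h0 : 0 < r) {m m' : Multiset ℕ} (h : m' ≤ m) :
    mval r m' ≤ mval r m := by
  obtain ⟨u, rfl⟩ : ∃ u, m = m' + u := ⟨m - m', (tsub_add_cancel_of_le h).symm.trans (add_comm _ _)⟩
  rw [mval_add]
  nlinarith [mval_nonneg h0 u]

lemma count_le_one_of_mval_pow {r : ℚ} (h0 : 0 < r) {k : ℕ} {m : Multiset ℕ}
    (hm : mval r m = r ^ k) : m.count k ≤ 1 := by
  by_contra hc
  push_neg at hc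
  have hle : Multiset.replicate 2 k ≤ m := Multiset.le_count_iff_replicate_le.mp hc
  have h2 := mval_mono h0 hle
  rw [mval_replicate, hm] at h2
  push_cast at h2
  have : (0:ℚ) < r ^ k := by positivity
  nlinarith

lemma card_one_of_count_one {r : ℚ} (h0 : 0 < r) {k : ℕ} {m : Multiset ℕ}
    (hm : mval r m = r ^ k) (hc : m.count k = 1) : m.card = 1 := by
  have hk : k ∈ m := Multiset.count_pos.mp (by omega)
  obtain ⟨m', rfl⟩ := Multiset.exists_cons_of_mem hk
  rw [mval_cons] at hm
  have hm' : mval r m' = 0 := by linarith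
  have : m' = 0 := by
    by_contra h
    obtain ⟨l, hl⟩ := Multiset.exists_mem_of_ne_zero h
    have h1 := le_mval_of_mem h0 hl
    have : (0:ℚ) < r ^ l := by positivity
    linarith
  subst this
  simp

lemma natAbs_ge_two {r : ℚ} (hn : 1 < r.num) : 2 ≤ r.num.natAbs := by omega

lemma card_eq_one_of_mval_pow_lt {r : ℚ} (h0 : 0 < r) (h1 : r < 1) (hn : 1 < r.num)
    {k : ℕ} {m : Multiset ℕ} (hm : mval r m = r ^ k) : m.card = 1 := by
  have hbound : ∀ j ∈ m, k ≤ j := by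
    intro j hj
    by_contra hjk
    push_neg at hjk
    have h2 : r ^ k < r ^ j := (pow_lt_pow_iff_right_of_lt_one₀ h0 h1).mpr hjk
    have h3 := le_mval_of_mem h0 hj
    rw [hm] at h3
    linarith
  have hc := count_le_one_of_mval_pow h0 hm
  rcases Nat.le_one_iff_eq_zero_or_eq_one.mp hc with hc0 | hc1
  · exfalso
    -- all elements ≥ k + 1
    have hb1 : ∀ j ∈ m, k + 1 ≤ j := by
      intro j hj
      have h1j := hbound j hj
      have : j ≠ k := by
        rintro rfl
        rw [← Multiset.count_pos, hc0] at hj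
        omega
      omega
    have hm0 : m ≠ 0 := by
      rintro rfl
      rw [mval_zero] at hm
      have : (0:ℚ) < r ^ k := by positivity
      linarith
    obtain ⟨j0, hj0⟩ := Multiset.exists_mem_of_ne_zero hm0
    set M := m.sup with hM
    have hbM : ∀ j ∈ m, j ≤ M := fun j hj => Multiset.le_sup hj
    have hkM : k ≤ M := le_trans (by omega : k ≤ k + 1) (le_trans (hb1 j0 hj0) (hbM j0 hj0))
    -- integer equation
    have hcast : (W r M m : ℚ) = ((r.num.natAbs ^ k * r.den ^ (M - k) : ℕ) : ℚ) := by
      rw [castW h0 M m hbM, hm, cast_term h0 hkM]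
    have hWeq : W r M m = r.num.natAbs ^ k * r.den ^ (M - k) := Nat.cast_injective hcast
    have hdvd : r.num.natAbs ^ (k + 1) ∣ W r M m := by
      apply Multiset.dvd_sum
      intro x hx
      obtain ⟨j, hj, rfl⟩ := Multiset.mem_map.mp hx
      exact Dvd.dvd.mul_right (pow_dvd_pow _ (hb1 j hj)) _
    rw [hWeq, pow_succ] at hdvd
    have hnz : r.num.natAbs ^ k ≠ 0 := by
      have := natAbs_ge_two hn
      positivity
    have hdvd2 : r.num.natAbs ∣ r.den ^ (M - k) :=
      (mul_dvd_mul_iff_left hnz).mp hdvd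
    have hcop : (r.num.natAbs).Coprime (r.den ^ (M - k)) := (coprime_nd).pow_right _
    have h1' : r.num.natAbs = 1 := Nat.Coprime.eq_one_of_dvd hcop hdvd2
    have := natAbs_ge_two hn
    omega
  · exact card_one_of_count_one h0 hm hc1

lemma card_eq_one_of_mval_pow_gt {r : ℚ} (h1 : 1 < r) (hd : r.den ≠ 1)
    {k : ℕ} {m : Multiset ℕ} (hm : mval r m = r ^ k) : m.card = 1 := by
  have h0 : 0 < r := lt_trans one_pos h1
  have hbound : ∀ j ∈ m, j ≤ k := by
    intro j hj
    have h3 := le_mval_of_mem h0 hj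
    rw [hm] at h3
    exact (pow_le_pow_iff_right₀ h1).mp h3
  have hc := count_le_one_of_mval_pow h0 hm
  rcases Nat.le_one_iff_eq_zero_or_eq_one.mp hc with hc0 | hc1
  · exfalso
    have hb1 : ∀ j ∈ m, j < k := by
      intro j hj
      have h1j := hbound j hj
      have : j ≠ k := by
        rintro rfl
        rw [← Multiset.count_pos, hc0] at hj
        omega
      omega
    have hcast : (W r k m : ℚ) = ((r.num.natAbs ^ k * r.den ^ (k - k) : ℕ) : ℚ) := by
      rw [castW h0 k m hbound, hm, cast_term h0 (le_refl k)]
    have hWeq : W r k m = r.num.natAbs ^ k := by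
      have := Nat.cast_injective hcast
      simpa using this
    have hdvd : r.den ∣ W r k m := by
      apply Multiset.dvd_sum
      intro x hx
      obtain ⟨j, hj, rfl⟩ := Multiset.mem_map.mp hx
      have : r.den ^ 1 ∣ r.den ^ (k - j) := pow_dvd_pow _ (by have := hb1 j hj; omega)
      rw [pow_one] at this
      exact Dvd.dvd.mul_left this _
    rw [hWeq] at hdvd
    have hcop : (r.den).Coprime (r.num.natAbs ^ k) := ((coprime_nd).symm).pow_right _
    have : r.den = 1 := Nat.Coprime.eq_one_of_dvd hcop hdvd
    exact hd this
  · exact card_one_of_count_one h0 hm hc1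

lemma atom_of_card (r : ℚ) (h0 : 0 < r) (k : ℕ)
    (hcard : ∀ m : Multiset ℕ, mval r m = r ^ k → m.card = 1) : IsAtomS r (r ^ k) := by
  refine ⟨pow_mem_S r k, by positivity, ?_⟩
  rintro ⟨y, z, hy, hz, hy0, hz0, hyz⟩
  obtain ⟨my, hmy⟩ := mem_S_iff.mp hy
  obtain ⟨mz, hmz⟩ := mem_S_iff.mp hz
  have h := hcard (my + mz) (by rw [mval_add, hmy, hmz, hyz])
  have h1 : my ≠ 0 := by rintro rfl; exact hy0 (by simp [← hmy, mval_zero])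
  have h2 : mz ≠ 0 := by rintro rfl; exact hz0 (by simp [← hmz, mval_zero])
  rw [Multiset.card_add] at h
  have := Multiset.card_pos.mpr h1
  have := Multiset.card_pos.mpr h2
  omega

lemma atoms_are_powers {r : ℚ} (h0 : 0 < r) {a : ℚ} (ha : IsAtomS r a) :
    ∃ i : ℕ, a = r ^ i := by
  obtain ⟨haS, ha0, hni⟩ := ha
  obtain ⟨m, hm⟩ := mem_S_iff.mp haS
  have hm0 : m ≠ 0 := by rintro rfl; exact ha0 (by simp [← hm, mval_zero])
  obtain ⟨j, hj⟩ := Multiset.exists_mem_of_ne_zero hm0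
  obtain ⟨m', rfl⟩ := Multiset.exists_cons_of_mem hj
  by_cases hm' : m' = 0
  · subst hm'
    exact ⟨j, by rw [← hm, mval_cons, mval_zero, add_zero]⟩
  · exfalso
    apply hni
    refine ⟨r ^ j, mval r m', pow_mem_S r j, mem_S_iff.mpr ⟨m', rfl⟩, by positivity, ?_, ?_⟩
    · obtain ⟨l, hl⟩ := Multiset.exists_mem_of_ne_zero hm'
      have := le_mval_of_mem h0 hl
      have : (0:ℚ) < r ^ l := by positivity
      nlinarith [le_mval_of_mem h0 hl]
    · rw [← hm, mval_cons]

/-! ### reduction and uniqueness (r > 1) -/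

def μ (r : ℚ) (m : Multiset ℕ) : ℕ := (m.map fun j => r.num.natAbs ^ j).sum

lemma μ_add (r : ℚ) (a b : Multiset ℕ) : μ r (a + b) = μ r a + μ r b := by
  simp [μ]

lemma μ_replicate (r : ℚ) (q j : ℕ) : μ r (Multiset.replicate q j) = q * r.num.natAbs ^ j := by
  simp [μ, Multiset.map_replicate, Multiset.sum_replicate, smul_eq_mul]

lemma num_pos_nat {r : ℚ} (h0 : 0 < r) : 1 ≤ r.num.natAbs := by
  have := Rat.num_pos.mpr h0
  omega

lemma den_lt_num {r : ℚ} (h1 : 1 < r) : r.den < r.num.natAbs := by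
  have h0 : 0 < r := lt_trans one_pos h1
  have hd := den_mul_self h0
  have hdpos : (0:ℚ) < (r.den : ℚ) := by exact_mod_cast r.pos
  have : (r.den : ℚ) < (r.num.natAbs : ℚ) := by nlinarith
  exact_mod_cast this

lemma den_pow_mul {r : ℚ} (h0 : 0 < r) {j : ℕ} (hj : 1 ≤ j) :
    (r.den : ℚ) * r ^ j = (r.num.natAbs : ℚ) * r ^ (j - 1) := by
  have hd := den_mul_self h0
  conv_lhs => rw [show j = j - 1 + 1 by omega]
  rw [pow_succ', ← mul_assoc, hd]

lemma reduce_exists {r : ℚ} (h1 : 1 < r) (hd : r.den ≠ 1) (m : Multiset ℕ) :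
    ∃ m' : Multiset ℕ, mval r m' = mval r m ∧ (∀ j, 1 ≤ j → m'.count j < r.den) ∧
      m.count 0 ≤ m'.count 0 := by
  have h0 : 0 < r := lt_trans one_pos h1
  have hnA := num_pos_nat h0
  have hd2 : 2 ≤ r.den := by have := r.pos; omega
  suffices H : ∀ N m, μ r m ≤ N → ∃ m' : Multiset ℕ, mval r m' = mval r m ∧
      (∀ j, 1 ≤ j → m'.count j < r.den) ∧ m.count 0 ≤ m'.count 0 by
    exact H (μ r m) m le_rfl
  intro N
  induction N with
  | zero =>
    intro m hμ
    have hm0 : m = 0 := by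
      by_contra h
      obtain ⟨j, hj⟩ := Multiset.exists_mem_of_ne_zero h
      obtain ⟨u, rfl⟩ := Multiset.exists_cons_of_mem hj
      have : μ r (j ::ₘ u) = r.num.natAbs ^ j + μ r u := by simp [μ]
      have hpow : 1 ≤ r.num.natAbs ^ j := Nat.one_le_pow _ _ (by omega)
      omega
    subst hm0
    exact ⟨0, rfl, fun j _ => by simp; omega, le_rfl⟩
  | succ N ih =>
    intro m hμ
    by_cases hred : ∀ j, 1 ≤ j → m.count j < r.den
    · exact ⟨m, rfl, hred, le_rfl⟩
    · push_neg at hred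
      obtain ⟨j, hj1, hjc⟩ := hred
      have hrep : Multiset.replicate r.den j ≤ m := Multiset.le_count_iff_replicate_le.mp hjc
      obtain ⟨u, hu⟩ : ∃ u, m = u + Multiset.replicate r.den j :=
        ⟨m - Multiset.replicate r.den j, (tsub_add_cancel_of_le hrep).symm⟩
      set m₂ := u + Multiset.replicate r.num.natAbs (j - 1) with hm₂
      have hval : mval r m₂ = mval r m := by
        rw [hu, hm₂, mval_add, mval_add, mval_replicate, mval_replicate,
          den_pow_mul h0 hj1]
      have hμ₂ : μ r m₂ ≤ N := by
        have e1 : μ r m = μ r u + r.den * r.num.natAbs ^ j := by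
          rw [hu, μ_add, μ_replicate]
        have e2 : μ r m₂ = μ r u + r.num.natAbs * r.num.natAbs ^ (j - 1) := by
          rw [hm₂, μ_add, μ_replicate]
        have e3 : r.num.natAbs * r.num.natAbs ^ (j - 1) = r.num.natAbs ^ j := by
          rw [← pow_succ']
          congr 1
          omega
        have hpow : 1 ≤ r.num.natAbs ^ j := Nat.one_le_pow _ _ (by omega)
        nlinarith
      obtain ⟨m', hv', hr', hc'⟩ := ih m₂ hμ₂
      refine ⟨m', by rw [hv', hval], hr', le_trans ?_ hc'⟩
      rw [hu, hm₂]
      simp only [Multiset.count_add, Multiset.count_replicate]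
      have h1 : (if j = (0:ℕ) then r.den else 0) = 0 := by
        have : ¬ (j = (0:ℕ)) := by omega
        simp [this]
      rw [h1]
      exact Nat.add_le_add_left (Nat.zero_le _) _

lemma reduced_unique_aux {r : ℚ} (h1 : 1 < r) : ∀ (M : ℕ) (m m' : Multiset ℕ),
    (∀ j ∈ m, j ≤ M) → (∀ j ∈ m', j ≤ M) →
    (∀ j, 1 ≤ j → m.count j < r.den) → (∀ j, 1 ≤ j → m'.count j < r.den) →
    mval r m = mval r m' → m = m' := by
  have h0 : 0 < r := lt_trans one_pos h1
  intro M
  induction M with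
  | zero =>
    intro m m' hb hb' _ _ hval
    have e1 : m = Multiset.replicate m.card 0 :=
      Multiset.eq_replicate_card.mpr (fun b hb0 => Nat.le_zero.mp (hb b hb0))
    have e2 : m' = Multiset.replicate m'.card 0 :=
      Multiset.eq_replicate_card.mpr (fun b hb0 => Nat.le_zero.mp (hb' b hb0))
    rw [e1, e2] at hval ⊢
    rw [mval_replicate, mval_replicate, pow_zero, mul_one, mul_one] at hval
    norm_num at hval
    rw [hval]
  | succ M ih =>
    intro m m' hb hb' hred hred' hval
    -- the counts at M+1 agree
    have hW : W r (M + 1) m = W r (M + 1) m' := by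
      have := castW h0 (M + 1) m hb
      have h2 := castW h0 (M + 1) m' hb'
      have : (W r (M + 1) m : ℚ) = (W r (M + 1) m' : ℚ) := by rw [this, h2, hval]
      exact_mod_cast this
    obtain ⟨q, hq⟩ := modW r (M + 1) m hb
    obtain ⟨q', hq'⟩ := modW r (M + 1) m' hb'
    have hmod : (m.count (M + 1) * r.num.natAbs ^ (M + 1)) % r.den
        = (m'.count (M + 1) * r.num.natAbs ^ (M + 1)) % r.den := by
      have e1 := congrArg (· % r.den) (hq ▸ hq' ▸ hW)
      simpa [Nat.add_mul_mod_self_left] using e1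
    have hcop : Nat.gcd r.den (r.num.natAbs ^ (M + 1)) = 1 :=
      ((coprime_nd (r := r)).symm.pow_right _)
    have hcount : m.count (M + 1) = m'.count (M + 1) := by
      have hmeq : Nat.ModEq r.den (m.count (M + 1)) (m'.count (M + 1)) :=
        Nat.ModEq.cancel_right_of_coprime hcop hmod
      have hlt := hred (M + 1) (by omega)
      have hlt' := hred' (M + 1) (by omega)
      unfold Nat.ModEq at hmeq
      rwa [Nat.mod_eq_of_lt hlt, Nat.mod_eq_of_lt hlt'] at hmeq
    -- split off the M+1 part
    have hsplit : ∀ mm : Multiset ℕ,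
        mm = Multiset.replicate (mm.count (M + 1)) (M + 1) + mm.filter (· ≠ M + 1) := by
      intro mm
      conv_lhs => rw [← Multiset.filter_add_not (· = M + 1) mm]
      congr 1
      rw [Multiset.filter_eq']
    have hbf : ∀ j ∈ m.filter (· ≠ M + 1), j ≤ M := by
      intro j hj
      rw [Multiset.mem_filter] at hj
      have := hb j hj.1
      have := hj.2
      omega
    have hbf' : ∀ j ∈ m'.filter (· ≠ M + 1), j ≤ M := by
      intro j hj
      rw [Multiset.mem_filter] at hj
      have := hb' j hj.1
      have := hj.2
      omega
    have hredf : ∀ j, 1 ≤ j → (m.filter (· ≠ M + 1)).count j < r.den := fun j hj =>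
      lt_of_le_of_lt (Multiset.count_le_of_le j (Multiset.filter_le _ m)) (hred j hj)
    have hredf' : ∀ j, 1 ≤ j → (m'.filter (· ≠ M + 1)).count j < r.den := fun j hj =>
      lt_of_le_of_lt (Multiset.count_le_of_le j (Multiset.filter_le _ m')) (hred' j hj)
    have hvalf : mval r (m.filter (· ≠ M + 1)) = mval r (m'.filter (· ≠ M + 1)) := by
      have e1 := congrArg (mval r) (hsplit m)
      have e2 := congrArg (mval r) (hsplit m')
      rw [mval_add, mval_replicate] at e1 e2
      rw [e1, e2, hcount] at hval
      exact add_left_cancel hval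
    have := ih _ _ hbf hbf' hredf hredf' hvalf
    rw [hsplit m, hsplit m', hcount, this]

lemma reduced_unique {r : ℚ} (h1 : 1 < r) (hd : r.den ≠ 1) (m m' : Multiset ℕ)
    (hred : ∀ j, 1 ≤ j → m.count j < r.den) (hred' : ∀ j, 1 ≤ j → m'.count j < r.den)
    (hval : mval r m = mval r m') : m = m' := by
  refine reduced_unique_aux h1 (m.sup ⊔ m'.sup) m m' ?_ ?_ hred hred' hval
  · exact fun j hj => le_trans (Multiset.le_sup hj) le_sup_left
  · exact fun j hj => le_trans (Multiset.le_sup hj) le_sup_right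

lemma key_not_dvd {r : ℚ} (h1 : 1 < r) (hd : r.den ≠ 1) (m : Multiset ℕ)
    (h0m : m.count 0 = 0) (hred : ∀ j, m.count j < r.den) :
    ¬ DvdS r 1 (mval r m) := by
  intro hdvd
  obtain ⟨m', hm'⟩ := mem_S_iff.mp hdvd
  have hval : mval r ((0 : ℕ) ::ₘ m') = mval r m := by
    rw [mval_cons, hm', pow_zero]; ring
  obtain ⟨mR, hvR, hredR, hcR⟩ := reduce_exists h1 hd ((0 : ℕ) ::ₘ m')
  have : m = mR := reduced_unique h1 hd m mR (fun j _ => hred j) hredR (by rw [hvR, hval])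
  rw [← this] at hcR
  rw [Multiset.count_cons_self] at hcR
  omega

lemma P_dvd {r : ℚ} (h1 : 1 < r) (e : ℕ) (he : 1 ≤ e) :
    DvdS r 1 ((r.den : ℚ) * r ^ e) := by
  have h0 : 0 < r := lt_trans one_pos h1
  have hnd := den_lt_num h1
  induction e, he using Nat.le_induction with
  | base =>
    have : (r.den : ℚ) * r ^ 1 - 1 = ((r.num.natAbs - 1 : ℕ) : ℚ) := by
      have := den_mul_self h0
      have h1n := num_pos_nat h0
      push_cast [Nat.cast_sub h1n]
      rw [pow_one]
      linarith
    unfold DvdS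
    rw [this]
    exact nat_mem_S _
  | succ e he ih =>
    unfold DvdS at ih ⊢
    have key : (r.den : ℚ) * r ^ (e + 1) - 1
        = ((r.num.natAbs - r.den : ℕ) : ℚ) * r ^ e + ((r.den : ℚ) * r ^ e - 1) := by
      have hde := den_pow_mul h0 (show 1 ≤ e + 1 by omega)
      push_cast [Nat.cast_sub (le_of_lt hnd)]
      simp only [Nat.add_sub_cancel] at hde
      rw [hde]
      ring
    rw [key]
    refine add_mem ?_ ih
    exact mem_S_iff.mpr ⟨Multiset.replicate (r.num.natAbs - r.den) e, by rw [mval_replicate]⟩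

lemma sum_const_pow {r : ℚ} {t : ℕ} (T : Finset (Fin t)) (k : ℕ) :
    ∑ _i ∈ T, r ^ k = (T.card : ℚ) * r ^ k := by
  rw [Finset.sum_const, nsmul_eq_mul]

lemma dpow_eq {r : ℚ} (h0 : 0 < r) (k : ℕ) :
    (r.den : ℚ) ^ k * r ^ k = (r.num.natAbs : ℚ) ^ k := by
  rw [← mul_pow, den_mul_self h0]

/-- Part 1: if `r < 1` no bound works. -/
lemma no_bound_lt_one {r : ℚ} (h0 : 0 < r) (h1 : r < 1) (hn : 1 < r.num) (nb : ℕ) :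
    ¬ OmegaBound r 1 nb := by
  intro hOB
  obtain ⟨k, hk⟩ := exists_pow_lt_of_lt_one
    (show (0:ℚ) < 1 / (nb + 1) by positivity) h1
  have hnb1 : (0:ℚ) < (nb:ℚ) + 1 := by positivity
  have hbnd : (nb : ℚ) * r ^ k < 1 := by
    have hk' : ((nb:ℚ) + 1) * r ^ k < 1 := by
      have := mul_lt_mul_of_pos_left hk hnb1
      rw [mul_one_div, div_self (ne_of_gt hnb1)] at this
      exact this
    have hrk : (0:ℚ) < r ^ k := by positivity
    nlinarith
  have hatom : IsAtomS r (r ^ k) :=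
    atom_of_card r h0 k (fun m hm => card_eq_one_of_mval_pow_lt h0 h1 hn hm)
  have h1n : 1 ≤ r.num.natAbs ^ k := Nat.one_le_pow _ _ (by omega)
  have hsum : ∑ _i : Fin (r.den ^ k), r ^ k = ((r.num.natAbs ^ k : ℕ) : ℚ) := by
    rw [sum_const_pow, Finset.card_univ, Fintype.card_fin]
    push_cast
    exact dpow_eq h0 k
  have hdvd : DvdS r 1 (∑ _i : Fin (r.den ^ k), r ^ k) := by
    unfold DvdS
    rw [hsum, show ((r.num.natAbs ^ k : ℕ) : ℚ) - 1 = ((r.num.natAbs ^ k - 1 : ℕ) : ℚ) by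
      push_cast [Nat.cast_sub h1n]; ring]
    exact nat_mem_S _
  obtain ⟨T, hTcard, hTdvd⟩ := hOB (r.den ^ k) (fun _ => r ^ k) (fun _ => hatom) hdvd
  unfold DvdS at hTdvd
  rw [sum_const_pow] at hTdvd
  have hge := S_nonneg h0 hTdvd
  have hle : (T.card : ℚ) * r ^ k ≤ (nb : ℚ) * r ^ k := by
    have : (T.card : ℚ) ≤ (nb : ℚ) := by exact_mod_cast hTcard
    have hrk : (0:ℚ) < r ^ k := by positivity
    nlinarith
  linarith

/-- Part 2 upper bound. -/
lemma upper_bound_gt {r : ℚ} (h1 : 1 < r) (hd : r.den ≠ 1) : OmegaBound r 1 r.den := by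
  have h0 : 0 < r := lt_trans one_pos h1
  have hd2 : 2 ≤ r.den := by have := r.pos; omega
  intro t a hatoms hdvd
  choose e he using fun i => atoms_are_powers h0 (hatoms i)
  by_cases hzero : ∃ i, e i = 0
  · obtain ⟨i, hi⟩ := hzero
    refine ⟨{i}, by simp; omega, ?_⟩
    unfold DvdS
    rw [Finset.sum_singleton, he i, hi, pow_zero, sub_self]
    exact zero_mem _
  · push_neg at hzero
    set mC : Multiset ℕ := Multiset.map e Finset.univ.val with hmC
    have hval : mval r mC = ∑ i, a i := by
      rw [Finset.sum_congr rfl (fun i _ => he i)]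
      rw [hmC, mval, Multiset.map_map]
      rfl
    by_cases hbig : ∃ j, r.den ≤ mC.count j
    · obtain ⟨j, hj⟩ := hbig
      have hjmem : j ∈ mC := Multiset.count_pos.mp (by omega)
      have hj0 : j ≠ 0 := by
        obtain ⟨i, _, rfl⟩ := Multiset.mem_map.mp hjmem
        exact hzero i
      have hcount : mC.count j = (Finset.univ.filter (fun i => e i = j)).card := by
        rw [hmC, Multiset.count_map, ← Finset.filter_val, Finset.card_def]
        refine congrArg (fun s : Finset (Fin t) => Multiset.card s.val) ?_
        ext i
        simp [eq_comm]
      obtain ⟨T, hTsub, hTcard⟩ := Finset.exists_subset_card_eq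
        (s := Finset.univ.filter (fun i => e i = j)) (n := r.den) (by omega)
      refine ⟨T, by omega, ?_⟩
      have hTsum : ∑ i ∈ T, a i = (r.den : ℚ) * r ^ j := by
        rw [Finset.sum_congr rfl (fun i hi => by
          rw [he i, (Finset.mem_filter.mp (hTsub hi)).2])]
        rw [sum_const_pow, hTcard]
      rw [hTsum]
      exact P_dvd h1 j (by omega)
    · exfalso
      push_neg at hbig
      have hc0 : mC.count 0 = 0 := by
        by_contra h
        have : (0:ℕ) ∈ mC := Multiset.count_pos.mp (by omega)
        obtain ⟨i, _, hi⟩ := Multiset.mem_map.mp this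
        exact hzero i hi
      have := key_not_dvd h1 hd mC hc0 hbig
      rw [hval] at this
      exact this hdvd

/-- Part 2 lower bound. -/
lemma lower_bound_gt {r : ℚ} (h1 : 1 < r) (hd : r.den ≠ 1) (hn : 1 < r.num)
    (nb : ℕ) (hOB : OmegaBound r 1 nb) : r.den ≤ nb := by
  have h0 : 0 < r := lt_trans one_pos h1
  have hd2 : 2 ≤ r.den := by have := r.pos; omega
  by_contra hlt
  push_neg at hlt
  have hatom : IsAtomS r r := by
    have := atom_of_card r h0 1 (fun m hm => card_eq_one_of_mval_pow_gt h1 hd hm)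
    rwa [pow_one] at this
  have h1n : 1 ≤ r.num.natAbs := num_pos_nat h0
  have hsum : ∑ _i : Fin r.den, r = ((r.num.natAbs : ℕ) : ℚ) := by
    rw [show (∑ _i : Fin r.den, r) = ∑ _i : Fin r.den, r ^ 1 by simp,
      sum_const_pow, Finset.card_univ, Fintype.card_fin, pow_one, den_mul_self h0]
  have hdvd : DvdS r 1 (∑ _i : Fin r.den, r) := by
    unfold DvdS
    rw [hsum, show ((r.num.natAbs : ℕ) : ℚ) - 1 = ((r.num.natAbs - 1 : ℕ) : ℚ) by
      push_cast [Nat.cast_sub h1n]; ring]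
    exact nat_mem_S _
  obtain ⟨T, hTcard, hTdvd⟩ := hOB r.den (fun _ => r) (fun _ => hatom) hdvd
  have hTsum : ∑ _i ∈ T, r = mval r (Multiset.replicate T.card 1) := by
    rw [mval_replicate, pow_one, show (∑ _i ∈ T, r) = ∑ _i ∈ T, r ^ 1 by simp,
      sum_const_pow, pow_one]
  rw [hTsum] at hTdvd
  refine key_not_dvd h1 hd (Multiset.replicate T.card 1) ?_ ?_ hTdvd
  · simp [Multiset.count_replicate]
  · intro j
    rw [Multiset.count_replicate]
    split <;> omega

theorem stmt18 (r : ℚ) (h0 : 0 < r) (hat : r = 1 ∨ 1 < r.num) :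
    (r < 1 → omegaS r 1 = ⊤) ∧
    (1 < r → r.den ≠ 1 → omegaS r 1 = (r.den : ℕ∞)) := by
  constructor
  · intro h1
    have hn : 1 < r.num := by
      rcases hat with h | h
      · exfalso; rw [h] at h1; exact lt_irrefl 1 h1
      · exact h
    have hempty : {N : ℕ∞ | ∃ n : ℕ, N = n ∧ OmegaBound r 1 n} = ∅ := by
      ext N
      simp only [Set.mem_setOf_eq, Set.mem_empty_iff_false, iff_false]
      rintro ⟨nb, rfl, hOB⟩
      exact no_bound_lt_one h0 h1 hn nb hOB
    rw [omegaS, hempty, sInf_empty]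
  · intro h1 hd
    apply le_antisymm
    · exact sInf_le ⟨r.den, rfl, upper_bound_gt h1 hd⟩
    · apply le_sInf
      rintro N ⟨nb, rfl, hOB⟩
      have hn : 1 < r.num := by
        rcases hat with h | h
        · exfalso; rw [h] at h1; exact lt_irrefl 1 h1
        · exact h
      exact_mod_cast lower_bound_gt h1 hd hn nb hOB
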